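/- Let W be an α'-Hölder continuous path on [0,∞) with W(0)=0 and let μ>0. Then the map τ ↦ ⟦W⟧_{α,[0,τ]} + μτ^{1-α}, where ⟦W⟧_{α,[0,τ]} = sup_{0≤s<t≤τ} |W(t)-W(s)|/(t-s)^α and 0<α<α'<1, is continuous and strictly increasing in τ, and tends to 0 as τ→0⁺ and to +∞ as τ→∞. Consequently there is a unique τ₀>0 with ⟦W⟧_{α,[0,τ₀]} + μτ₀^{1-α} = μ. -/

import Mathlib

open Set Filter

/-- The `α`-Hölder seminorm of a path `W` over the interval `[a,b]`. -/
noncomputable def hoSemi {E : Type*} [NormedAddCommGroup E] (α : ℝ) (W : ℝ → E) (a b : ℝ) : ℝ :=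
  sSup {c : ℝ | ∃ s t : ℝ, a ≤ s ∧ s < t ∧ t ≤ b ∧ c = ‖W t - W s‖ / (t - s) ^ α}

namespace Stmt0Aux

variable {d : ℕ}

/-- The set whose supremum is `hoSemi α W 0 τ`. -/
def hSet (α : ℝ) (W : ℝ → (Fin d → ℝ)) (τ : ℝ) : Set ℝ :=
  {c : ℝ | ∃ s t : ℝ, 0 ≤ s ∧ s < t ∧ t ≤ τ ∧ c = ‖W t - W s‖ / (t - s) ^ α}

lemma hoSemi_eq (α : ℝ) (W : ℝ → (Fin d → ℝ)) (τ : ℝ) :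
    hoSemi α W 0 τ = sSup (hSet α W τ) := rfl

lemma mem_nonneg {α : ℝ} {W : ℝ → (Fin d → ℝ)} {τ c : ℝ} (hc : c ∈ hSet α W τ) : 0 ≤ c := by
  obtain ⟨s, t, hs, hst, ht, rfl⟩ := hc
  exact div_nonneg (norm_nonneg _) (Real.rpow_nonneg (by linarith) α)

lemma hoSemi_nonneg (α : ℝ) (W : ℝ → (Fin d → ℝ)) (τ : ℝ) : 0 ≤ hoSemi α W 0 τ :=
  Real.sSup_nonneg (fun _ hc => mem_nonneg hc)

lemma mem_le {α α' C τ : ℝ} (hα : 0 < α) (hαα' : α < α') {W : ℝ → (Fin d → ℝ)}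
    (hC : 0 ≤ C)
    (hH : ∀ s ∈ Icc (0:ℝ) τ, ∀ t ∈ Icc (0:ℝ) τ, ‖W t - W s‖ ≤ C * |t - s| ^ α')
    {c : ℝ} (hc : c ∈ hSet α W τ) : c ≤ C * τ ^ (α' - α) := by
  obtain ⟨s, t, hs, hst, ht, rfl⟩ := hc
  have h1 : 0 < t - s := by linarith
  have h2 : ‖W t - W s‖ ≤ C * (t - s) ^ α' := by
    have := hH s ⟨hs, by linarith⟩ t ⟨by linarith, ht⟩
    rwa [abs_of_pos h1] at this
  have h3 : (0:ℝ) < (t - s) ^ α := Real.rpow_pos_of_pos h1 α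
  calc ‖W t - W s‖ / (t - s) ^ α ≤ (C * (t - s) ^ α') / (t - s) ^ α := by gcongr
    _ = C * (t - s) ^ (α' - α) := by rw [Real.rpow_sub h1, mul_div_assoc]
    _ ≤ C * τ ^ (α' - α) := by
        gcongr
        · linarith

lemma bddAbove_hSet {α α' : ℝ} (hα : 0 < α) (hαα' : α < α') {W : ℝ → (Fin d → ℝ)}
    (hHolder : ∀ T : ℝ, 0 < T → ∃ C : ℝ, ∀ s ∈ Icc (0:ℝ) T, ∀ t ∈ Icc (0:ℝ) T,
      ‖W t - W s‖ ≤ C * |t - s| ^ α') (τ : ℝ) :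
    BddAbove (hSet α W τ) := by
  rcases le_or_gt τ 0 with hτ | hτ
  · have : hSet α W τ = (∅ : Set ℝ) := by
      ext c
      simp only [hSet, mem_setOf_eq, mem_empty_iff_false, iff_false]
      rintro ⟨s, t, hs, hst, ht, -⟩
      linarith
    rw [this]; exact bddAbove_empty
  · obtain ⟨C, hC⟩ := hHolder τ hτ
    refine ⟨max C 0 * τ ^ (α' - α), fun c hc => mem_le hα hαα' (le_max_right _ _) ?_ hc⟩
    intro s hs t ht
    exact (hC s hs t ht).trans
      (mul_le_mul_of_nonneg_right (le_max_left _ _) (by positivity))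

lemma hoSemi_mono {α : ℝ} {W : ℝ → (Fin d → ℝ)} {σ τ : ℝ} (hστ : σ ≤ τ)
    (hbdd : BddAbove (hSet α W τ)) : hoSemi α W 0 σ ≤ hoSemi α W 0 τ := by
  rw [hoSemi_eq, hoSemi_eq]
  rcases (hSet α W σ).eq_empty_or_nonempty with h | h
  · rw [h, Real.sSup_empty]
    exact Real.sSup_nonneg (fun _ hc => mem_nonneg hc)
  · refine csSup_le_csSup hbdd h ?_
    rintro c ⟨s, t, hs, hst, ht, rfl⟩
    exact ⟨s, t, hs, hst, le_trans ht hστ, rfl⟩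

lemma hoSemi_le_add {α α' C : ℝ} (hα : 0 < α) (hαα' : α < α') {W : ℝ → (Fin d → ℝ)}
    {τ τ' : ℝ} (hτ : 0 < τ) (hττ' : τ ≤ τ') (hC : 0 ≤ C)
    (hH : ∀ s ∈ Icc (0:ℝ) τ', ∀ t ∈ Icc (0:ℝ) τ', ‖W t - W s‖ ≤ C * |t - s| ^ α') :
    hoSemi α W 0 τ' ≤ hoSemi α W 0 τ + C * (τ' - τ) ^ (α' - α) := by
  have hHτ : ∀ s ∈ Icc (0:ℝ) τ, ∀ t ∈ Icc (0:ℝ) τ, ‖W t - W s‖ ≤ C * |t - s| ^ α' :=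
    fun s hs t ht => hH s ⟨hs.1, hs.2.trans hττ'⟩ t ⟨ht.1, ht.2.trans hττ'⟩
  have hbdd : BddAbove (hSet α W τ) :=
    ⟨C * τ ^ (α' - α), fun c hc => mem_le hα hαα' hC hHτ hc⟩
  have hns : 0 ≤ hoSemi α W 0 τ := hoSemi_nonneg α W τ
  have hrt : (0:ℝ) ≤ C * (τ' - τ) ^ (α' - α) :=
    mul_nonneg hC (Real.rpow_nonneg (by linarith) _)
  rw [hoSemi_eq]
  refine Real.sSup_le ?_ (by linarith)
  rintro c ⟨s, t, hs, hst, ht, rfl⟩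
  have hαα : (0:ℝ) ≤ α' - α := by linarith
  rcases le_or_gt t τ with htτ | htτ
  · have : ‖W t - W s‖ / (t - s) ^ α ≤ hoSemi α W 0 τ :=
      le_csSup hbdd ⟨s, t, hs, hst, htτ, rfl⟩
    linarith
  rcases le_or_gt τ s with hτs | hτs
  · have h1 : 0 < t - s := by linarith
    have h2 : ‖W t - W s‖ ≤ C * (t - s) ^ α' := by
      have := hH s ⟨hs, by linarith⟩ t ⟨by linarith, ht⟩
      rwa [abs_of_pos h1] at this
    have h3 : (0:ℝ) < (t - s) ^ α := Real.rpow_pos_of_pos h1 α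
    have : ‖W t - W s‖ / (t - s) ^ α ≤ C * (τ' - τ) ^ (α' - α) := by
      calc ‖W t - W s‖ / (t - s) ^ α ≤ (C * (t - s) ^ α') / (t - s) ^ α := by gcongr
        _ = C * (t - s) ^ (α' - α) := by rw [Real.rpow_sub h1, mul_div_assoc]
        _ ≤ C * (τ' - τ) ^ (α' - α) := by gcongr <;> linarith
    linarith
  · -- s < τ < t
    have h1 : 0 < t - s := by linarith
    have h2 : 0 < t - τ := by linarith
    have h3 : 0 < τ - s := by linarith
    have hts : (0:ℝ) < (t - s) ^ α := Real.rpow_pos_of_pos h1 α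
    have htτp : (0:ℝ) < (t - τ) ^ α := Real.rpow_pos_of_pos h2 α
    have hτsp : (0:ℝ) < (τ - s) ^ α := Real.rpow_pos_of_pos h3 α
    have tri : ‖W t - W s‖ ≤ ‖W t - W τ‖ + ‖W τ - W s‖ :=
      norm_sub_le_norm_sub_add_norm_sub _ _ _
    have step1 : ‖W t - W s‖ / (t - s) ^ α
        ≤ ‖W t - W τ‖ / (t - τ) ^ α + ‖W τ - W s‖ / (τ - s) ^ α := by
      have e1 : ‖W t - W τ‖ / (t - s) ^ α ≤ ‖W t - W τ‖ / (t - τ) ^ α :=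
        div_le_div_of_nonneg_left (norm_nonneg _) htτp
          (Real.rpow_le_rpow h2.le (by linarith) hα.le)
      have e2 : ‖W τ - W s‖ / (t - s) ^ α ≤ ‖W τ - W s‖ / (τ - s) ^ α :=
        div_le_div_of_nonneg_left (norm_nonneg _) hτsp
          (Real.rpow_le_rpow h3.le (by linarith) hα.le)
      calc ‖W t - W s‖ / (t - s) ^ α
          ≤ (‖W t - W τ‖ + ‖W τ - W s‖) / (t - s) ^ α := by gcongr
        _ = ‖W t - W τ‖ / (t - s) ^ α + ‖W τ - W s‖ / (t - s) ^ α := add_div _ _ _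
        _ ≤ _ := add_le_add e1 e2
    have step2 : ‖W t - W τ‖ / (t - τ) ^ α ≤ C * (τ' - τ) ^ (α' - α) := by
      have hb : ‖W t - W τ‖ ≤ C * (t - τ) ^ α' := by
        have := hH τ ⟨hτ.le, hττ'⟩ t ⟨by linarith, ht⟩
        rwa [abs_of_pos h2] at this
      calc ‖W t - W τ‖ / (t - τ) ^ α ≤ (C * (t - τ) ^ α') / (t - τ) ^ α := by gcongr
        _ = C * (t - τ) ^ (α' - α) := by rw [Real.rpow_sub h2, mul_div_assoc]
        _ ≤ C * (τ' - τ) ^ (α' - α) := by gcongr <;> linarith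
    have step3 : ‖W τ - W s‖ / (τ - s) ^ α ≤ hoSemi α W 0 τ :=
      le_csSup hbdd ⟨s, τ, hs, hτs, le_refl τ, rfl⟩
    linarith

lemma hoSemi_le {α α' C τ : ℝ} (hα : 0 < α) (hαα' : α < α') {W : ℝ → (Fin d → ℝ)}
    (hC : 0 ≤ C) (hτ : 0 ≤ τ)
    (hH : ∀ s ∈ Icc (0:ℝ) τ, ∀ t ∈ Icc (0:ℝ) τ, ‖W t - W s‖ ≤ C * |t - s| ^ α') :
    hoSemi α W 0 τ ≤ C * τ ^ (α' - α) := by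
  rw [hoSemi_eq]
  exact Real.sSup_le (fun c hc => mem_le hα hαα' hC hH hc)
    (mul_nonneg hC (Real.rpow_nonneg hτ _))

lemma exists_nonneg_C {α' : ℝ} {W : ℝ → (Fin d → ℝ)}
    (hHolder : ∀ T : ℝ, 0 < T → ∃ C : ℝ, ∀ s ∈ Icc (0:ℝ) T, ∀ t ∈ Icc (0:ℝ) T,
      ‖W t - W s‖ ≤ C * |t - s| ^ α') (T : ℝ) (hT : 0 < T) :
    ∃ C : ℝ, 0 ≤ C ∧ ∀ s ∈ Icc (0:ℝ) T, ∀ t ∈ Icc (0:ℝ) T,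
      ‖W t - W s‖ ≤ C * |t - s| ^ α' := by
  obtain ⟨C, hC⟩ := hHolder T hT
  exact ⟨max C 0, le_max_right _ _, fun s hs t ht => (hC s hs t ht).trans
    (mul_le_mul_of_nonneg_right (le_max_left _ _) (by positivity))⟩

lemma hoSemi_continuousAt {α α' : ℝ} (hα : 0 < α) (hαα' : α < α') {W : ℝ → (Fin d → ℝ)}
    (hHolder : ∀ T : ℝ, 0 < T → ∃ C : ℝ, ∀ s ∈ Icc (0:ℝ) T, ∀ t ∈ Icc (0:ℝ) T,
      ‖W t - W s‖ ≤ C * |t - s| ^ α') {τ₀ : ℝ} (hτ₀ : 0 < τ₀) :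
    ContinuousAt (fun τ => hoSemi α W 0 τ) τ₀ := by
  obtain ⟨C, hC0, hC⟩ := exists_nonneg_C hHolder (τ₀ + 1) (by linarith)
  have key : ∀ τ ∈ Ioo (0:ℝ) (τ₀ + 1),
      |hoSemi α W 0 τ - hoSemi α W 0 τ₀| ≤ C * |τ - τ₀| ^ (α' - α) := by
    intro τ hτ
    rcases le_or_gt τ₀ τ with hle | hlt
    · have hH' : ∀ s ∈ Icc (0:ℝ) τ, ∀ t ∈ Icc (0:ℝ) τ, ‖W t - W s‖ ≤ C * |t - s| ^ α' :=
        fun s hs t ht => hC s ⟨hs.1, hs.2.trans hτ.2.le⟩ t ⟨ht.1, ht.2.trans hτ.2.le⟩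
      have h1 := hoSemi_le_add hα hαα' hτ₀ hle hC0 hH'
      have h2 : hoSemi α W 0 τ₀ ≤ hoSemi α W 0 τ :=
        hoSemi_mono hle ⟨C * τ ^ (α' - α), fun c hc => mem_le hα hαα' hC0 hH' hc⟩
      rw [abs_of_nonneg (by linarith), abs_of_nonneg (by linarith)]
      linarith
    · have hH' : ∀ s ∈ Icc (0:ℝ) τ₀, ∀ t ∈ Icc (0:ℝ) τ₀, ‖W t - W s‖ ≤ C * |t - s| ^ α' :=
        fun s hs t ht => hC s ⟨hs.1, by linarith [hs.2]⟩ t ⟨ht.1, by linarith [ht.2]⟩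
      have h1 := hoSemi_le_add hα hαα' hτ.1 hlt.le hC0 hH'
      have h2 : hoSemi α W 0 τ ≤ hoSemi α W 0 τ₀ :=
        hoSemi_mono hlt.le ⟨C * τ₀ ^ (α' - α), fun c hc => mem_le hα hαα' hC0 hH' hc⟩
      rw [abs_of_nonpos (by linarith),
        show |τ - τ₀| = τ₀ - τ by rw [abs_sub_comm]; exact abs_of_nonneg (by linarith)]
      linarith
  have hbound : Tendsto (fun τ => C * |τ - τ₀| ^ (α' - α)) (nhds τ₀) (nhds 0) := by
    have h1 : Tendsto (fun τ : ℝ => |τ - τ₀|) (nhds τ₀) (nhds 0) := by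
      have hcc : Continuous (fun τ : ℝ => |τ - τ₀|) :=
        (continuous_id.sub continuous_const).abs
      have := hcc.tendsto τ₀
      simpa using this
    have h2 : Tendsto (fun x : ℝ => x ^ (α' - α)) (nhds 0) (nhds 0) := by
      have := (Real.continuousAt_rpow_const 0 (α' - α) (Or.inr (by linarith))).tendsto
      rwa [Real.zero_rpow (sub_ne_zero_of_ne hαα'.ne')] at this
    simpa using (h2.comp h1).const_mul C
  have hdiff : Tendsto (fun τ => hoSemi α W 0 τ - hoSemi α W 0 τ₀) (nhds τ₀) (nhds 0) := by
    apply squeeze_zero_norm' _ hbound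
    filter_upwards [Ioo_mem_nhds hτ₀ (lt_add_one τ₀)] with τ hτ
    simpa [Real.norm_eq_abs] using key τ hτ
  have := hdiff.add_const (hoSemi α W 0 τ₀)
  simpa [ContinuousAt] using this

end Stmt0Aux

/-- For a locally `α'`-Hölder path `W` with `W 0 = 0` and `μ > 0`,
the map `τ ↦ ⟦W⟧_{α,[0,τ]} + μ τ^(1-α)` is continuous and strictly increasing on `(0,∞)`,
tends to `0` as `τ → 0⁺` and to `∞` as `τ → ∞`; hence there is a unique `τ₀ > 0` at which
it equals `μ`. -/
theorem stmt0 {d : ℕ} (W : ℝ → (Fin d → ℝ)) (α α' μ : ℝ)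
    (hα : 0 < α) (hαα' : α < α') (hα'1 : α' < 1) (hμ : 0 < μ) (hW0 : W 0 = 0)
    (hHolder : ∀ T : ℝ, 0 < T → ∃ C : ℝ, ∀ s ∈ Icc (0:ℝ) T, ∀ t ∈ Icc (0:ℝ) T,
      ‖W t - W s‖ ≤ C * |t - s| ^ α') :
    ContinuousOn (fun τ => hoSemi α W 0 τ + μ * τ ^ (1 - α)) (Ioi 0) ∧
    StrictMonoOn (fun τ => hoSemi α W 0 τ + μ * τ ^ (1 - α)) (Ioi 0) ∧
    Tendsto (fun τ => hoSemi α W 0 τ + μ * τ ^ (1 - α)) (nhdsWithin 0 (Ioi 0)) (nhds 0) ∧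
    Tendsto (fun τ => hoSemi α W 0 τ + μ * τ ^ (1 - α)) atTop atTop ∧
    ∃! τ₀ : ℝ, 0 < τ₀ ∧ hoSemi α W 0 τ₀ + μ * τ₀ ^ (1 - α) = μ := by
  have h1α : 0 < 1 - α := by linarith
  set F := fun τ : ℝ => hoSemi α W 0 τ + μ * τ ^ (1 - α) with hFdef
  have hcont : ContinuousOn F (Ioi 0) := by
    intro τ₀ hτ₀
    have hc1 := Stmt0Aux.hoSemi_continuousAt hα hαα' hHolder (mem_Ioi.mp hτ₀)
    have hc2 : ContinuousAt (fun τ : ℝ => μ * τ ^ (1 - α)) τ₀ :=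
      continuousAt_const.mul (Real.continuousAt_rpow_const τ₀ (1 - α)
        (Or.inl (mem_Ioi.mp hτ₀).ne'))
    exact (hc1.add hc2).continuousWithinAt
  have hmono : StrictMonoOn F (Ioi 0) := by
    intro a ha b hb hab
    have h1 : hoSemi α W 0 a ≤ hoSemi α W 0 b :=
      Stmt0Aux.hoSemi_mono hab.le (Stmt0Aux.bddAbove_hSet hα hαα' hHolder b)
    have h2 : μ * a ^ (1 - α) < μ * b ^ (1 - α) :=
      mul_lt_mul_of_pos_left (Real.rpow_lt_rpow (le_of_lt (mem_Ioi.mp ha)) hab h1α) hμ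
    exact add_lt_add_of_le_of_lt h1 h2
  have h0 : Tendsto F (nhdsWithin 0 (Ioi 0)) (nhds 0) := by
    obtain ⟨C, hC0, hC⟩ := Stmt0Aux.exists_nonneg_C hHolder 1 one_pos
    apply squeeze_zero' (g := fun τ : ℝ => C * τ ^ (α' - α) + μ * τ ^ (1 - α))
    · filter_upwards [self_mem_nhdsWithin] with τ hτ
      exact add_nonneg (Stmt0Aux.hoSemi_nonneg _ _ _)
        (mul_nonneg hμ.le (Real.rpow_nonneg (le_of_lt (mem_Ioi.mp hτ)) _))
    · filter_upwards [Ioc_mem_nhdsGT_of_mem (⟨le_refl 0, one_pos⟩ : (0:ℝ) ∈ Ico 0 1)]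
        with τ hτ
      have hH' : ∀ s ∈ Icc (0:ℝ) τ, ∀ t ∈ Icc (0:ℝ) τ, ‖W t - W s‖ ≤ C * |t - s| ^ α' :=
        fun s hs t ht => hC s ⟨hs.1, hs.2.trans hτ.2⟩ t ⟨ht.1, ht.2.trans hτ.2⟩
      have h1 : hoSemi α W 0 τ ≤ C * τ ^ (α' - α) :=
        Stmt0Aux.hoSemi_le hα hαα' hC0 hτ.1.le hH'
      exact add_le_add h1 (le_refl _)
    · have t1 : Tendsto (fun τ : ℝ => C * τ ^ (α' - α) + μ * τ ^ (1 - α)) (nhds 0)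
          (nhds (C * (0:ℝ) ^ (α' - α) + μ * (0:ℝ) ^ (1 - α))) := by
        apply ContinuousAt.tendsto
        exact (continuousAt_const.mul (Real.continuousAt_rpow_const 0 _
            (Or.inr (by linarith)))).add
          (continuousAt_const.mul (Real.continuousAt_rpow_const 0 _ (Or.inr h1α.le)))
      rw [Real.zero_rpow (sub_ne_zero_of_ne hαα'.ne'), Real.zero_rpow h1α.ne'] at t1
      simpa using t1.mono_left nhdsWithin_le_nhds
  have hT : Tendsto F atTop atTop := by
    apply Filter.tendsto_atTop_mono (fun τ => ?_) ((tendsto_rpow_atTop h1α).const_mul_atTop hμ)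
    exact le_add_of_nonneg_left (Stmt0Aux.hoSemi_nonneg _ _ _)
  refine ⟨hcont, hmono, h0, hT, ?_⟩
  have e1 : ∀ᶠ τ in nhdsWithin 0 (Ioi 0), F τ < μ := h0.eventually_lt_const hμ
  have e2 : ∀ᶠ τ in nhdsWithin (0:ℝ) (Ioi 0), τ ∈ Ioi (0:ℝ) :=
    Filter.eventually_of_mem self_mem_nhdsWithin (fun x hx => hx)
  obtain ⟨a, haμ, ha⟩ := (e1.and e2).exists
  obtain ⟨b, hbμ, hab⟩ := ((hT.eventually_ge_atTop μ).and (eventually_ge_atTop a)).exists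
  have ha0 : (0:ℝ) < a := ha
  have hsub : Icc a b ⊆ Ioi 0 := fun x hx => lt_of_lt_of_le ha0 hx.1
  obtain ⟨τ₀, hτ₀mem, hτ₀eq⟩ := intermediate_value_Icc hab (hcont.mono hsub)
    (⟨haμ.le, hbμ⟩ : μ ∈ Icc (F a) (F b))
  have hτ₀pos : 0 < τ₀ := lt_of_lt_of_le ha0 hτ₀mem.1
  refine ⟨τ₀, ⟨hτ₀pos, hτ₀eq⟩, ?_⟩
  rintro y ⟨hy0, hyF⟩
  exact hmono.injOn (mem_Ioi.mpr hy0) (mem_Ioi.mpr hτ₀pos) (hyF.trans hτ₀eq.symm)
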